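/- For n = 0 and 1 < a ≤ √2, the unique solution t(0,a,h) of the pantographic equation tends to +∞ as h → 0⁺; whereas for a > √2 it tends to 1/√(a²−2) as h → 0⁺. -/
import Mathlib


open Real Filter

set_option maxHeartbeats 1600000

/-- For `n = 0` and `1 < a ≤ √2`, `t(0,a,h) → +∞` as `h → 0⁺`; whereas for
`a > √2` it tends to `1/√(a²−2)` as `h → 0⁺`. -/
theorem t_zero_limit_h_to_zero (a : ℝ) (ha : 1 < a) (t : ℝ → ℝ)
    (ht : ∀ h : ℝ, 0 < h → 1 / a < t h ∧
      (0 : ℝ) = (a ^ 2 * (t h) ^ 2 - 1) / (2 * a * t h) * h +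
        ((a ^ 2 - 2) * (t h) ^ 2 - 1) / (2 * t h * Real.sqrt (1 + (t h) ^ 2))) :
    (a ≤ Real.sqrt 2 → Tendsto t (nhdsWithin 0 (Set.Ioi 0)) atTop) ∧
    (Real.sqrt 2 < a →
      Tendsto t (nhdsWithin 0 (Set.Ioi 0)) (nhds (1 / Real.sqrt (a ^ 2 - 2)))) := by
  have ha0 : (0:ℝ) < a := by linarith
  have key : ∀ h : ℝ, 0 < h →
      0 < t h ∧ 1 < a * t h ∧
      h * ((a^2*(t h)^2 - 1) * Real.sqrt (1 + (t h)^2)) = a * (1 - (a^2-2)*(t h)^2) := by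
    intro h hh
    obtain ⟨htl, heq⟩ := ht h hh
    have htpos : 0 < t h := lt_trans (by positivity) htl
    have hat : 1 < a * t h := by
      rw [div_lt_iff₀ ha0] at htl; nlinarith
    have hs : 0 < Real.sqrt (1 + (t h)^2) := Real.sqrt_pos.2 (by positivity)
    refine ⟨htpos, hat, ?_⟩
    have ha0' : a ≠ 0 := ne_of_gt ha0
    have ht0 : t h ≠ 0 := ne_of_gt htpos
    have hs0 : Real.sqrt (1 + (t h)^2) ≠ 0 := ne_of_gt hs
    field_simp at heq
    nlinarith [heq]
  constructor
  · -- a ≤ √2 case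
    intro ha2
    have ha2' : a^2 ≤ 2 := by
      nlinarith [Real.sq_sqrt (by norm_num : (0:ℝ) ≤ 2), Real.sqrt_nonneg 2]
    rw [tendsto_atTop]
    intro b
    set M : ℝ := max b 1 with hM
    have hM1 : (1:ℝ) ≤ M := le_max_right _ _
    have hMb : b ≤ M := le_max_left _ _
    have hMpos : 0 < M := by linarith
    have hSM : 0 < Real.sqrt (1 + M^2) := Real.sqrt_pos.2 (by positivity)
    have haM : 1 < a * M := by nlinarith
    have hnum : 0 < a^2*M^2 - 1 := by nlinarith [mul_pos (sub_pos.2 haM) (by positivity : (0:ℝ) < a*M+1)]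
    have hC : 0 < (a^2*M^2 - 1) * Real.sqrt (1 + M^2) := mul_pos hnum hSM
    set C : ℝ := (a^2*M^2 - 1) * Real.sqrt (1 + M^2) with hCdef
    have hδ : 0 < a / C := div_pos ha0 hC
    filter_upwards [Ioo_mem_nhdsGT_of_mem (Set.mem_Ico.2 ⟨le_refl (0:ℝ), hδ⟩)] with h hh
    obtain ⟨hh0, hhδ⟩ := hh
    obtain ⟨htpos, hat, heq⟩ := key h hh0
    refine le_trans hMb ?_
    by_contra hcon
    push_neg at hcon
    have h1 : Real.sqrt (1 + (t h)^2) ≤ Real.sqrt (1 + M^2) := by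
      apply Real.sqrt_le_sqrt
      nlinarith [mul_nonneg (sub_nonneg.2 hcon.le) (by linarith : 0 ≤ M + t h)]
    have h2 : a^2*(t h)^2 - 1 ≤ a^2*M^2 - 1 := by
      nlinarith [mul_nonneg (sub_nonneg.2 hcon.le) (by linarith : 0 ≤ M + t h), sq_nonneg a]
    have h3 : 0 < a^2*(t h)^2 - 1 := by
      nlinarith [mul_pos (sub_pos.2 hat) (by positivity : (0:ℝ) < a*(t h)+1)]
    have hs : 0 ≤ Real.sqrt (1 + (t h)^2) := Real.sqrt_nonneg _
    have hfac : (a^2*(t h)^2 - 1) * Real.sqrt (1 + (t h)^2) ≤ C := by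
      rw [hCdef]
      exact mul_le_mul h2 h1 hs hnum.le
    have h4 : h * ((a^2*(t h)^2 - 1) * Real.sqrt (1 + (t h)^2)) ≤ h * C :=
      mul_le_mul_of_nonneg_left hfac hh0.le
    have h5 : h * C < a := by
      rw [lt_div_iff₀ hC] at hhδ; linarith
    have h6 : a ≤ a * (1 - (a^2-2)*(t h)^2) := by
      nlinarith [mul_nonneg (mul_nonneg ha0.le (by linarith : (0:ℝ) ≤ 2 - a^2)) (sq_nonneg (t h))]
    linarith [heq ▸ h4]
  · -- a > √2 case
    intro ha2
    have hb : 0 < a^2 - 2 := by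
      nlinarith [Real.sq_sqrt (by norm_num : (0:ℝ) ≤ 2), Real.sqrt_nonneg 2]
    set b := a^2 - 2 with hbdef
    set L : ℝ := 1 / Real.sqrt b with hLdef
    have hsb : 0 < Real.sqrt b := Real.sqrt_pos.2 hb
    have hLpos : 0 < L := by rw [hLdef]; positivity
    have hbL : b * L^2 = 1 := by
      rw [hLdef, div_pow, one_pow, Real.sq_sqrt hb.le]
      field_simp
    have hSL : 0 < Real.sqrt (1 + L^2) := Real.sqrt_pos.2 (by positivity)
    have hsba : Real.sqrt b < a := by
      have h1 : Real.sqrt b < Real.sqrt (a^2) := Real.sqrt_lt_sqrt hb.le (by rw [hbdef]; linarith)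
      rwa [Real.sqrt_sq ha0.le] at h1
    have haL : 1 < a * L := by
      rw [hLdef, mul_one_div, lt_div_iff₀ hsb]; linarith
    have hnumL : 0 < a^2*L^2 - 1 := by
      nlinarith [mul_pos (sub_pos.2 haL) (by positivity : (0:ℝ) < a*L+1)]
    set K : ℝ := (a^2*L^2 - 1) * Real.sqrt (1 + L^2) / (a * b * L) with hKdef
    have habL : 0 < a * b * L := by positivity
    have hKpos : 0 < K := div_pos (mul_pos hnumL hSL) habL
    have hKeq : (a * b * L) * K = (a^2*L^2 - 1) * Real.sqrt (1 + L^2) := by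
      rw [hKdef]; field_simp
    have hub : ∀ h : ℝ, 0 < h → t h ≤ L := by
      intro h hh
      obtain ⟨htpos, hat, heq⟩ := key h hh
      have hs : 0 < Real.sqrt (1 + (t h)^2) := Real.sqrt_pos.2 (by positivity)
      have h3 : 0 < a^2*(t h)^2 - 1 := by
        nlinarith [mul_pos (sub_pos.2 hat) (by positivity : (0:ℝ) < a*(t h)+1)]
      have hlhs : 0 < a * (1 - b*(t h)^2) := by
        rw [← heq]
        exact mul_pos hh (mul_pos h3 hs)
      have hposr : 0 < 1 - b*(t h)^2 := by
        rcases mul_pos_iff.mp hlhs with ⟨_, hp⟩ | ⟨hn, _⟩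
        · exact hp
        · linarith
      have h2 : b * (t h)^2 < b * L^2 := by rw [hbL]; linarith
      have h2' : (t h)^2 < L^2 := (mul_lt_mul_iff_right₀ hb).mp h2
      exact le_of_lt (lt_of_pow_lt_pow_left₀ 2 hLpos.le h2')
    have hlb : ∀ h : ℝ, 0 < h → L - K * h ≤ t h := by
      intro h hh
      obtain ⟨htpos, hat, heq⟩ := key h hh
      have htL := hub h hh
      have hs : 0 ≤ Real.sqrt (1 + (t h)^2) := Real.sqrt_nonneg _
      have hs1 : Real.sqrt (1 + (t h)^2) ≤ Real.sqrt (1 + L^2) := by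
        apply Real.sqrt_le_sqrt
        nlinarith [mul_nonneg (sub_nonneg.2 htL) (by linarith : 0 ≤ L + t h)]
      have h2 : a^2*(t h)^2 - 1 ≤ a^2*L^2 - 1 := by
        nlinarith [mul_nonneg (sub_nonneg.2 htL) (by linarith : 0 ≤ L + t h), sq_nonneg a]
      have hfac : (a^2*(t h)^2 - 1) * Real.sqrt (1 + (t h)^2) ≤ (a^2*L^2 - 1) * Real.sqrt (1 + L^2) :=
        mul_le_mul h2 hs1 hs hnumL.le
      have h4 : a * (1 - b*(t h)^2) ≤ h * ((a^2*L^2 - 1) * Real.sqrt (1 + L^2)) := by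
        rw [← heq]
        exact mul_le_mul_of_nonneg_left hfac hh.le
      have h5 : b * L * (L - t h) ≤ 1 - b*(t h)^2 := by
        nlinarith [mul_nonneg (mul_nonneg hb.le htpos.le) (sub_nonneg.2 htL), hbL]
      have hmain : (a * b * L) * (L - t h) ≤ (a * b * L) * (K * h) := by
        calc (a * b * L) * (L - t h) = a * (b * L * (L - t h)) := by ring
          _ ≤ a * (1 - b*(t h)^2) := by nlinarith [h5]
          _ ≤ h * ((a^2*L^2 - 1) * Real.sqrt (1 + L^2)) := h4
          _ = h * ((a * b * L) * K) := by rw [hKeq]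
          _ = (a * b * L) * (K * h) := by ring
      have := le_of_mul_le_mul_left hmain habL
      linarith
    have hLlim : Tendsto (fun h : ℝ => L - K * h) (nhdsWithin 0 (Set.Ioi 0)) (nhds L) := by
      have h1 : Tendsto (fun h : ℝ => L - K * h) (nhds 0) (nhds (L - K * 0)) :=
        tendsto_const_nhds.sub (tendsto_const_nhds.mul tendsto_id)
      simpa using h1.mono_left nhdsWithin_le_nhds
    refine tendsto_of_tendsto_of_tendsto_of_le_of_le' hLlim tendsto_const_nhds ?_ ?_
    · filter_upwards [self_mem_nhdsWithin] with h hh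
      exact hlb h hh
    · filter_upwards [self_mem_nhdsWithin] with h hh
      exact hub h hh
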